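/- There is a group homomorphism from the projective modular group PSL₂(ℤ) = ℤ₂ ∗ ℤ₃, presented as ⟨s, t | s² = 1, t³ = 1⟩ (PresentedGroup), to the group of invertible n×n complex matrices, sending s to A and t to B, for every choice of the complex matrices S₁,…,S₆, T₁,…,T₆. -/
import Mathlib


noncomputable section

open Matrix

/-- The primitive third root of unity `ρ = exp(2πi/3)`. -/
def ρ : ℂ := Complex.exp (2 * Real.pi * Complex.I / 3)

/-- The index set of the `6×6`-block matrices with block sizes `a 0, …, a 5`. -/
abbrev BIdx (a : Fin 6 → ℕ) := (i : Fin 6) × Fin (a i)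

/-- The `n×n` matrix with the block `M` in block position `(i, j)` and zeroes elsewhere. -/
def emb {a : Fin 6 → ℕ} (i j : Fin 6) (M : Matrix (Fin (a i)) (Fin (a j)) ℂ) :
    Matrix (BIdx a) (BIdx a) ℂ := fun p q =>
  if h : p.1 = i ∧ q.1 = j then
    M (Fin.cast (congrArg a h.1) p.2) (Fin.cast (congrArg a h.2) q.2)
  else 0

variable {a : Fin 6 → ℕ}

/-- The matrix `A`: diagonal blocks `(1, −1, 1, −1, 1, −1)` and off-diagonal blocks
`A₁₂ = iρS₁`, `A₁₆ = T₆`, `A₃₂ = T₂`, `A₃₄ = iρ²S₃`, `A₅₄ = T₄`, `A₅₆ = iS₅`. -/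
def Amat (S₁ : Matrix (Fin (a 0)) (Fin (a 1)) ℂ) (S₃ : Matrix (Fin (a 2)) (Fin (a 3)) ℂ)
    (S₅ : Matrix (Fin (a 4)) (Fin (a 5)) ℂ) (T₂ : Matrix (Fin (a 2)) (Fin (a 1)) ℂ)
    (T₄ : Matrix (Fin (a 4)) (Fin (a 3)) ℂ) (T₆ : Matrix (Fin (a 0)) (Fin (a 5)) ℂ) :
    Matrix (BIdx a) (BIdx a) ℂ :=
  emb 0 0 1 + emb 1 1 (-1) + emb 2 2 1 + emb 3 3 (-1) + emb 4 4 1 + emb 5 5 (-1) +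
    emb 0 1 ((Complex.I * ρ) • S₁) + emb 0 5 T₆ + emb 2 1 T₂ +
    emb 2 3 ((Complex.I * ρ ^ 2) • S₃) + emb 4 3 T₄ + emb 4 5 (Complex.I • S₅)

/-- The matrix `B`: diagonal blocks `(1, ρ, ρ², 1, ρ, ρ²)` and off-diagonal blocks
`B₂₁ = iT₁`, `B₂₃ = S₂`, `B₄₃ = iT₃`, `B₄₅ = ρS₄`, `B₆₁ = ρ²S₆`, `B₆₅ = iT₅`. -/
def Bmat (S₂ : Matrix (Fin (a 1)) (Fin (a 2)) ℂ) (S₄ : Matrix (Fin (a 3)) (Fin (a 4)) ℂ)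
    (S₆ : Matrix (Fin (a 5)) (Fin (a 0)) ℂ) (T₁ : Matrix (Fin (a 1)) (Fin (a 0)) ℂ)
    (T₃ : Matrix (Fin (a 3)) (Fin (a 2)) ℂ) (T₅ : Matrix (Fin (a 5)) (Fin (a 4)) ℂ) :
    Matrix (BIdx a) (BIdx a) ℂ :=
  emb 0 0 1 + emb 1 1 (ρ • 1) + emb 2 2 (ρ ^ 2 • 1) + emb 3 3 1 + emb 4 4 (ρ • 1) +
    emb 5 5 (ρ ^ 2 • 1) + emb 1 0 (Complex.I • T₁) + emb 1 2 S₂ +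
    emb 3 2 (Complex.I • T₃) + emb 3 4 (ρ • S₄) + emb 5 0 (ρ ^ 2 • S₆) +
    emb 5 4 (Complex.I • T₅)

lemma rho_cube : ρ ^ 3 = 1 := by
  rw [ρ, ← Complex.exp_nat_mul]
  norm_num
  have : (3 : ℂ) * (2 * Real.pi * Complex.I / 3) = 2 * Real.pi * Complex.I := by ring
  rw [this, Complex.exp_two_pi_mul_I]

lemma rho_ne_one : ρ ≠ 1 := by
  rw [ρ]
  intro h
  rw [Complex.exp_eq_one_iff] at h
  obtain ⟨n, hn⟩ := h
  have hπ : (Real.pi : ℂ) ≠ 0 := Complex.ofReal_ne_zero.mpr Real.pi_ne_zero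
  have hI : Complex.I ≠ 0 := Complex.I_ne_zero
  have h2 : 2 * (Real.pi : ℂ) * Complex.I * 1 = 2 * Real.pi * Complex.I * (3 * n) := by
    linear_combination 3 * hn
  have h1 : (1 : ℂ) = 3 * n :=
    mul_left_cancel₀ (by simp [hπ, hI] : 2 * (Real.pi : ℂ) * Complex.I ≠ 0) h2
  have h3 : (1 : ℤ) = 3 * n := by exact_mod_cast h1
  omega

lemma rho_sum : ρ ^ 2 + ρ + 1 = 0 := by
  have h : (ρ - 1) * (ρ ^ 2 + ρ + 1) = 0 := by
    linear_combination rho_cube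
  rcases mul_eq_zero.mp h with h1 | h2
  · exact absurd (sub_eq_zero.mp h1) rho_ne_one
  · exact h2

@[simp] lemma finCast_self {n : ℕ} (h : n = n) (x : Fin n) : Fin.cast h x = x := rfl

lemma emb_mul (i j l : Fin 6) (M : Matrix (Fin (a i)) (Fin (a j)) ℂ)
    (N : Matrix (Fin (a j)) (Fin (a l)) ℂ) :
    emb i j M * emb j l N = emb (a := a) i l (M * N) := by
  ext p q
  rw [Matrix.mul_apply, ← Finset.univ_sigma_univ, Finset.sum_sigma]
  rw [Finset.sum_eq_single j]
  · by_cases hp : p.1 = i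
    · by_cases hq : q.1 = l
      · simp [emb, hp, hq, Matrix.mul_apply]
      · simp [emb, hq]
    · simp [emb, hp]
  · intro b _ hb
    apply Finset.sum_eq_zero
    intro x _
    simp [emb, hb]
  · simp

lemma emb_mul_ne {i j k l : Fin 6} (h : j ≠ k) (M : Matrix (Fin (a i)) (Fin (a j)) ℂ)
    (N : Matrix (Fin (a k)) (Fin (a l)) ℂ) :
    emb i j M * emb k l N = 0 := by
  ext p q
  rw [Matrix.mul_apply]
  apply Finset.sum_eq_zero
  intro r _
  by_cases hr : r.1 = j
  · have : r.1 ≠ k := hr ▸ h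
    simp [emb, this]
  · simp [emb, hr]

@[simp] lemma emb_neg (i j : Fin 6) (M : Matrix (Fin (a i)) (Fin (a j)) ℂ) :
    emb (a := a) i j (-M) = -emb i j M := by
  ext p q
  by_cases h : p.1 = i ∧ q.1 = j <;> simp [emb, h]

@[simp] lemma emb_smul (i j : Fin 6) (c : ℂ) (M : Matrix (Fin (a i)) (Fin (a j)) ℂ) :
    emb (a := a) i j (c • M) = c • emb i j M := by
  ext p q
  by_cases h : p.1 = i ∧ q.1 = j <;> simp [emb, h]

lemma one_eq : (1 : Matrix (BIdx a) (BIdx a) ℂ) =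
    emb 0 0 1 + emb 1 1 1 + emb 2 2 1 + emb 3 3 1 + emb 4 4 1 + emb 5 5 1 := by
  have h : (1 : Matrix (BIdx a) (BIdx a) ℂ) = ∑ i : Fin 6, emb i i 1 := by
    ext ⟨pi, px⟩ ⟨qi, qx⟩
    rw [Matrix.sum_apply, Finset.sum_eq_single pi]
    · by_cases h : qi = pi
      · subst h
        simp [emb, Matrix.one_apply, Sigma.mk.inj_iff]
      · simp [emb, Matrix.one_apply, Sigma.mk.inj_iff, h, Ne.symm h]
    · intro b _ hb
      simp [emb, Ne.symm hb]
    · simp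
  rw [h, Fin.sum_univ_six]

lemma Amat_sq (S₁ : Matrix (Fin (a 0)) (Fin (a 1)) ℂ) (S₃ : Matrix (Fin (a 2)) (Fin (a 3)) ℂ)
    (S₅ : Matrix (Fin (a 4)) (Fin (a 5)) ℂ) (T₂ : Matrix (Fin (a 2)) (Fin (a 1)) ℂ)
    (T₄ : Matrix (Fin (a 4)) (Fin (a 3)) ℂ) (T₆ : Matrix (Fin (a 0)) (Fin (a 5)) ℂ) :
    Amat S₁ S₃ S₅ T₂ T₄ T₆ * Amat S₁ S₃ S₅ T₂ T₄ T₆ = 1 := by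
  rw [Amat, one_eq]
  simp only [add_mul, mul_add]
  simp (disch := decide) only [emb_mul, emb_mul_ne, Matrix.one_mul, Matrix.mul_one,
    Matrix.mul_neg, Matrix.neg_mul, neg_neg, emb_neg, emb_smul, add_zero, zero_add,
    Matrix.mul_zero, Matrix.zero_mul, smul_mul_assoc, mul_smul_comm, smul_zero,
    smul_neg, neg_zero, smul_smul]
  match_scalars <;> ring

lemma Bmat_sq (S₂ : Matrix (Fin (a 1)) (Fin (a 2)) ℂ) (S₄ : Matrix (Fin (a 3)) (Fin (a 4)) ℂ)
    (S₆ : Matrix (Fin (a 5)) (Fin (a 0)) ℂ) (T₁ : Matrix (Fin (a 1)) (Fin (a 0)) ℂ)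
    (T₃ : Matrix (Fin (a 3)) (Fin (a 2)) ℂ) (T₅ : Matrix (Fin (a 5)) (Fin (a 4)) ℂ) :
    Bmat S₂ S₄ S₆ T₁ T₃ T₅ * Bmat S₂ S₄ S₆ T₁ T₃ T₅ =
      emb 0 0 1 + emb 1 1 (ρ ^ 2 • 1) + emb 2 2 (ρ ^ 4 • 1) + emb 3 3 1 + emb 4 4 (ρ ^ 2 • 1) +
      emb 5 5 (ρ ^ 4 • 1) + emb 1 0 (((ρ + 1) * Complex.I) • T₁) + emb 1 2 ((ρ + ρ ^ 2) • S₂) +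
      emb 3 2 (((1 + ρ ^ 2) * Complex.I) • T₃) + emb 3 4 (((1 + ρ) * ρ) • S₄) +
      emb 5 0 (((ρ ^ 2 + 1) * ρ ^ 2) • S₆) + emb 5 4 (((ρ ^ 2 + ρ) * Complex.I) • T₅) := by
  rw [Bmat]
  simp only [add_mul, mul_add]
  simp (disch := decide) only [emb_mul, emb_mul_ne, Matrix.one_mul, Matrix.mul_one,
    Matrix.mul_neg, Matrix.neg_mul, neg_neg, emb_neg, emb_smul, add_zero, zero_add,
    Matrix.mul_zero, Matrix.zero_mul, smul_mul_assoc, mul_smul_comm, smul_zero,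
    smul_neg, neg_zero, smul_smul]
  match_scalars <;> ring

lemma Bmat_cube (S₂ : Matrix (Fin (a 1)) (Fin (a 2)) ℂ) (S₄ : Matrix (Fin (a 3)) (Fin (a 4)) ℂ)
    (S₆ : Matrix (Fin (a 5)) (Fin (a 0)) ℂ) (T₁ : Matrix (Fin (a 1)) (Fin (a 0)) ℂ)
    (T₃ : Matrix (Fin (a 3)) (Fin (a 2)) ℂ) (T₅ : Matrix (Fin (a 5)) (Fin (a 4)) ℂ) :
    Bmat S₂ S₄ S₆ T₁ T₃ T₅ * Bmat S₂ S₄ S₆ T₁ T₃ T₅ * Bmat S₂ S₄ S₆ T₁ T₃ T₅ = 1 := by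
  rw [Bmat_sq, Bmat, one_eq]
  simp only [add_mul, mul_add]
  simp (disch := decide) only [emb_mul, emb_mul_ne, Matrix.one_mul, Matrix.mul_one,
    Matrix.mul_neg, Matrix.neg_mul, neg_neg, emb_neg, emb_smul, add_zero, zero_add,
    Matrix.mul_zero, Matrix.zero_mul, smul_mul_assoc, mul_smul_comm, smul_zero,
    smul_neg, neg_zero, smul_smul]
  match_scalars <;>
    first
      | ring1
      | linear_combination (norm := ring1) rho_cube
      | linear_combination (norm := ring1) (ρ ^ 3 + 1) * rho_cube
      | linear_combination (norm := ring1) Complex.I * rho_sum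
      | linear_combination (norm := ring1) ρ * rho_sum
      | linear_combination (norm := ring1) ρ ^ 2 * rho_sum
      | linear_combination (norm := ring1) (Complex.I * ρ ^ 2) * rho_sum
      | linear_combination (norm := ring1) (ρ ^ 2 * (ρ ^ 2 - ρ + 1)) * rho_sum
      | linear_combination (norm := ring1) (Complex.I * (ρ ^ 2 - ρ + 1)) * rho_sum

/-- Relations of the projective modular group `PSL₂(ℤ) = ⟨s, t | s² = 1, t³ = 1⟩`,
with `s` encoded as `true` and `t` as `false`. -/
def psl2Rels : Set (FreeGroup Bool) :=
  {FreeGroup.of true ^ 2, FreeGroup.of false ^ 3}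

/-- For every choice of the matrices `S₁,…,S₆, T₁,…,T₆` there is a group homomorphism
from `PSL₂(ℤ) = ⟨s, t | s² = 1, t³ = 1⟩` to the invertible `n×n` complex matrices
sending `s ↦ A` and `t ↦ B`. -/
theorem psl2z_representation (a : Fin 6 → ℕ)
    (S₁ : Matrix (Fin (a 0)) (Fin (a 1)) ℂ) (S₂ : Matrix (Fin (a 1)) (Fin (a 2)) ℂ)
    (S₃ : Matrix (Fin (a 2)) (Fin (a 3)) ℂ) (S₄ : Matrix (Fin (a 3)) (Fin (a 4)) ℂ)
    (S₅ : Matrix (Fin (a 4)) (Fin (a 5)) ℂ) (S₆ : Matrix (Fin (a 5)) (Fin (a 0)) ℂ)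
    (T₁ : Matrix (Fin (a 1)) (Fin (a 0)) ℂ) (T₂ : Matrix (Fin (a 2)) (Fin (a 1)) ℂ)
    (T₃ : Matrix (Fin (a 3)) (Fin (a 2)) ℂ) (T₄ : Matrix (Fin (a 4)) (Fin (a 3)) ℂ)
    (T₅ : Matrix (Fin (a 5)) (Fin (a 4)) ℂ) (T₆ : Matrix (Fin (a 0)) (Fin (a 5)) ℂ) :
    ∃ φ : PresentedGroup psl2Rels →* (Matrix (BIdx a) (BIdx a) ℂ)ˣ,
      (φ (PresentedGroup.of true) : Matrix (BIdx a) (BIdx a) ℂ) = Amat S₁ S₃ S₅ T₂ T₄ T₆ ∧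
      (φ (PresentedGroup.of false) : Matrix (BIdx a) (BIdx a) ℂ) = Bmat S₂ S₄ S₆ T₁ T₃ T₅ := by
  set A := Amat S₁ S₃ S₅ T₂ T₄ T₆ with hA
  set B := Bmat S₂ S₄ S₆ T₁ T₃ T₅ with hB
  have hA2 : A * A = 1 := Amat_sq _ _ _ _ _ _
  have hB3 : B * B * B = 1 := Bmat_cube _ _ _ _ _ _
  have hB3' : B * (B * B) = 1 := by rw [← mul_assoc]; exact hB3
  let uA : (Matrix (BIdx a) (BIdx a) ℂ)ˣ := ⟨A, A, hA2, hA2⟩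
  let uB : (Matrix (BIdx a) (BIdx a) ℂ)ˣ := ⟨B, B * B, hB3', hB3⟩
  let f : Bool → (Matrix (BIdx a) (BIdx a) ℂ)ˣ := fun b => cond b uA uB
  have hrels : ∀ r ∈ psl2Rels, FreeGroup.lift f r = 1 := by
    rintro r (rfl | rfl)
    · rw [map_pow, FreeGroup.lift_apply_of]
      ext
      simp [f, uA, pow_two, hA2]
    · rw [map_pow, FreeGroup.lift_apply_of]
      ext
      simp [f, uB, pow_succ, pow_two, hB3]
  refine ⟨PresentedGroup.toGroup hrels, ?_, ?_⟩
  · rw [PresentedGroup.toGroup.of]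
    rfl
  · rw [PresentedGroup.toGroup.of]
    rfl
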